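/- Let Ω be a finite set of n players and let G₁ = {id} be the trivial permutation group. Then the dimension of the affine space 𝒜_{G₁} of all quasi-values on Ω equals n·2^{n−1} − 2^n + 1. -/

import Mathlib

open scoped BigOperators

/-- The space of cooperative games on player set `Ω`: real-valued functions on
coalitions vanishing on the empty coalition. -/
def GameSpace (Ω : Type*) [DecidableEq Ω] : Submodule ℝ (Finset Ω → ℝ) where
  carrier := {v | v ∅ = 0}
  add_mem' := by
    intro a b ha hb
    simp only [Set.mem_setOf_eq, Pi.add_apply] at *
    simp [ha, hb]
  zero_mem' := rfl
  smul_mem' := by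
    intro c v hv
    simp only [Set.mem_setOf_eq, Pi.smul_apply] at *
    simp [hv]

/-- A (linear) game value: a linear operator from games to payoff vectors. -/
abbrev GameValue (Ω : Type*) [DecidableEq Ω] := GameSpace Ω →ₗ[ℝ] (Ω → ℝ)

/-- Player `i` is a null player of the game `v`: `v(R ∪ {i}) = v(R)` for all `R`. -/
def IsNullPlayer {Ω : Type*} [DecidableEq Ω] (i : Ω) (v : GameSpace Ω) : Prop :=
  ∀ R : Finset Ω, (v : Finset Ω → ℝ) (insert i R) = (v : Finset Ω → ℝ) R

/-- A quasi-value: a linear game value satisfying the null-player property and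
efficiency. -/
def IsQuasiValue {Ω : Type*} [Fintype Ω] [DecidableEq Ω] (φ : GameValue Ω) : Prop :=
  (∀ (v : GameSpace Ω) (i : Ω), IsNullPlayer i v → φ v i = 0) ∧
  (∀ v : GameSpace Ω, ∑ i, φ v i = (v : Finset Ω → ℝ) Finset.univ)

/-- The action of a permutation on a game: `(g • v)(R) = v(g⁻¹(R))`. -/
def permGame {Ω : Type*} [DecidableEq Ω] (g : Equiv.Perm Ω) (v : GameSpace Ω) :
    GameSpace Ω :=
  ⟨fun R => (v : Finset Ω → ℝ) (R.image (g⁻¹ : Equiv.Perm Ω)), by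
    show (v : Finset Ω → ℝ) ((∅ : Finset Ω).image (g⁻¹ : Equiv.Perm Ω)) = 0
    rw [Finset.image_empty]
    exact v.2⟩

/-- `φ` is symmetric with respect to all permutations in `G`:
`φ(g • v) = g • φ(v)`, i.e. `φ(g • v)ᵢ = φ(v)_{g⁻¹ i}` for all `g ∈ G`. -/
def IsGSym {Ω : Type*} [DecidableEq Ω] (G : Subgroup (Equiv.Perm Ω))
    (φ : GameValue Ω) : Prop :=
  ∀ g ∈ G, ∀ (v : GameSpace Ω) (i : Ω), φ (permGame g v) i = φ v (g⁻¹ i)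

/-- The unanimity game `u_R` for a nonempty coalition `R`. -/
def unanimity {Ω : Type*} [DecidableEq Ω] (R : Finset Ω) (hR : R.Nonempty) :
    GameSpace Ω :=
  ⟨fun S => if R ⊆ S then (1 : ℝ) else 0, by
    show (if R ⊆ (∅ : Finset Ω) then (1 : ℝ) else 0) = 0
    simp [Finset.subset_empty, hR.ne_empty]⟩

open Finset

section Aux17
variable {Ω : Type*} [DecidableEq Ω]

lemma sum_pow_neg_one (A : Finset Ω) :
    ∑ U ∈ A.powerset, (-1 : ℝ) ^ U.card = if A = ∅ then 1 else 0 := by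
  have h := Finset.sum_powerset_neg_one_pow_card (x := A)
  have h2 : ((∑ m ∈ A.powerset, (-1 : ℤ) ^ m.card : ℤ) : ℝ)
      = ((if A = ∅ then 1 else 0 : ℤ) : ℝ) := by rw [h]
  push_cast at h2
  simpa using h2

lemma sum_pow_neg_one_sdiff (A : Finset Ω) :
    ∑ U ∈ A.powerset, (-1 : ℝ) ^ (A \ U).card = if A = ∅ then 1 else 0 := by
  rw [← sum_pow_neg_one A]
  refine Finset.sum_nbij' (fun U => A \ U) (fun U => A \ U) ?_ ?_ ?_ ?_ ?_
  · intro a ha; exact mem_powerset.2 (sdiff_subset)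
  · intro a ha; exact mem_powerset.2 (sdiff_subset)
  · intro a ha; exact Finset.sdiff_sdiff_eq_self (mem_powerset.1 ha)
  · intro a ha; exact Finset.sdiff_sdiff_eq_self (mem_powerset.1 ha)
  · intro a ha; rfl

/-- key indicator moebius sum -/
lemma sum_subsets_indicator (S A : Finset Ω) :
    ∑ R ∈ S.powerset, (if A ⊆ R then (-1 : ℝ) ^ ((R \ A).card) else 0)
      = if S = A then 1 else 0 := by
  rw [Finset.sum_ite, Finset.sum_const_zero, add_zero]
  by_cases hA : A ⊆ S
  · have : ∑ R ∈ S.powerset.filter (fun R => A ⊆ R), (-1 : ℝ) ^ ((R \ A).card)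
        = ∑ U ∈ (S \ A).powerset, (-1 : ℝ) ^ U.card := by
      refine Finset.sum_nbij' (fun R => R \ A) (fun U => U ∪ A) ?_ ?_ ?_ ?_ ?_
      · intro a ha
        simp only [mem_filter, mem_powerset] at ha
        exact mem_powerset.2 (sdiff_subset_sdiff ha.1 le_rfl)
      · intro a ha
        simp only [mem_powerset] at ha
        refine mem_filter.2 ⟨mem_powerset.2 (union_subset (ha.trans sdiff_subset) hA), subset_union_right⟩
      · intro a ha
        simp only [mem_filter, mem_powerset] at ha
        exact sdiff_union_of_subset ha.2
      · intro a ha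
        simp only [mem_powerset] at ha
        exact union_sdiff_cancel_right (Finset.sdiff_disjoint.mono_left ha)
      · intro a ha; rfl
    rw [this, sum_pow_neg_one]
    have : S \ A = ∅ ↔ S = A := by
      rw [sdiff_eq_empty_iff_subset]
      constructor
      · intro h; exact subset_antisymm h hA
      · intro h; exact h.le
    simp [this]
  · have h1 : S.powerset.filter (fun R => A ⊆ R) = ∅ := by
      refine filter_eq_empty_iff.2 ?_
      intro R hR hAR
      exact hA (hAR.trans (mem_powerset.1 hR))
    have h2 : S ≠ A := by rintro rfl; exact hA le_rfl
    simp [h1, h2]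


/-- Harsanyi dividend of coalition `R` in game `v`. -/
def div0 (v : Finset Ω → ℝ) (R : Finset Ω) : ℝ :=
  ∑ T ∈ R.powerset, (-1 : ℝ) ^ ((R \ T).card) * v T

lemma div0_moebius (v : Finset Ω → ℝ) (S : Finset Ω) :
    ∑ R ∈ S.powerset, div0 v R = v S := by
  unfold div0
  have step1 : ∀ R ∈ S.powerset,
      ∑ T ∈ R.powerset, (-1 : ℝ) ^ ((R \ T).card) * v T
        = ∑ T ∈ S.powerset, (if T ⊆ R then (-1 : ℝ) ^ ((R \ T).card) else 0) * v T := by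
    intro R hR
    rw [show (∑ T ∈ R.powerset, (-1 : ℝ) ^ ((R \ T).card) * v T)
        = ∑ T ∈ R.powerset, (if T ⊆ R then (-1 : ℝ) ^ ((R \ T).card) else 0) * v T from
      Finset.sum_congr rfl (fun T hT => by rw [if_pos (mem_powerset.1 hT)])]
    exact Finset.sum_subset (Finset.powerset_mono.2 (mem_powerset.1 hR))
      (fun T _ hT => by rw [if_neg (fun h => hT (mem_powerset.2 h)), zero_mul])
  rw [Finset.sum_congr rfl step1, Finset.sum_comm]
  have step2 : ∀ T ∈ S.powerset,
      ∑ R ∈ S.powerset, (if T ⊆ R then (-1 : ℝ) ^ ((R \ T).card) else 0) * v T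
        = (if S = T then 1 else 0) * v T := by
    intro T _
    rw [← Finset.sum_mul, sum_subsets_indicator]
  rw [Finset.sum_congr rfl step2]
  rw [Finset.sum_eq_single S]
  · simp
  · intro T _ hT; rw [if_neg (fun h => hT h.symm), zero_mul]
  · intro h; exact absurd (mem_powerset.2 le_rfl) h

lemma div0_unanimity (A R : Finset Ω) :
    div0 (fun S => if A ⊆ S then (1 : ℝ) else 0) R = if R = A then 1 else 0 := by
  unfold div0
  simp_rw [mul_ite, mul_one, mul_zero]
  rw [Finset.sum_ite, Finset.sum_const_zero, add_zero]
  by_cases hA : A ⊆ R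
  · have key : ∑ T ∈ R.powerset.filter (fun T => A ⊆ T), (-1 : ℝ) ^ ((R \ T).card)
        = ∑ U ∈ (R \ A).powerset, (-1 : ℝ) ^ U.card := by
      refine Finset.sum_nbij' (fun T => R \ T) (fun U => R \ U) ?_ ?_ ?_ ?_ ?_
      · intro T hT
        simp only [mem_filter, mem_powerset] at hT
        exact mem_powerset.2 (sdiff_subset_sdiff le_rfl hT.2)
      · intro U hU
        simp only [mem_powerset] at hU
        refine mem_filter.2 ⟨mem_powerset.2 sdiff_subset, ?_⟩
        refine subset_sdiff.2 ⟨hA, Finset.sdiff_disjoint.mono_left hU |>.symm⟩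
      · intro T hT
        simp only [mem_filter, mem_powerset] at hT
        exact Finset.sdiff_sdiff_eq_self hT.1
      · intro U hU
        simp only [mem_powerset] at hU
        exact Finset.sdiff_sdiff_eq_self (hU.trans sdiff_subset)
      · intro T _; rfl
    rw [key, sum_pow_neg_one]
    have : R \ A = ∅ ↔ R = A := by
      rw [sdiff_eq_empty_iff_subset]
      exact ⟨fun h => subset_antisymm h hA, fun h => h.le⟩
    simp [this]
  · have h1 : R.powerset.filter (fun T => A ⊆ T) = ∅ := by
      refine filter_eq_empty_iff.2 ?_
      intro T hT hAT
      exact hA (hAT.trans (mem_powerset.1 hT))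
    have h2 : R ≠ A := by rintro rfl; exact hA le_rfl
    simp [h1, h2]

lemma div0_null {v : Finset Ω → ℝ} {i : Ω} {R : Finset Ω} (hi : i ∈ R)
    (hv : ∀ T, v (insert i T) = v T) : div0 v R = 0 := by
  obtain ⟨R', hiR', rfl⟩ : ∃ R', i ∉ R' ∧ R = insert i R' :=
    ⟨R.erase i, Finset.notMem_erase i R, (Finset.insert_erase hi).symm⟩
  unfold div0
  rw [Finset.sum_powerset_insert hiR']
  have h1 : ∀ T ∈ R'.powerset,
      (-1 : ℝ) ^ ((insert i R' \ T).card) * v T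
        = -((-1 : ℝ) ^ ((R' \ T).card) * v T) := by
    intro T hT
    have hiT : i ∉ T := fun h => hiR' (mem_powerset.1 hT h)
    rw [Finset.insert_sdiff_of_notMem _ hiT,
      Finset.card_insert_of_notMem (fun h => hiR' (Finset.mem_sdiff.1 h).1), pow_succ]
    ring
  have h2 : ∀ T ∈ R'.powerset,
      (-1 : ℝ) ^ ((insert i R' \ insert i T).card) * v (insert i T)
        = (-1 : ℝ) ^ ((R' \ T).card) * v T := by
    intro T hT
    have : insert i R' \ insert i T = R' \ T := by
      ext j
      simp only [Finset.mem_sdiff, Finset.mem_insert]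
      constructor
      · rintro ⟨hj1 | hj1, hj2⟩
        · exact absurd (Or.inl hj1) hj2
        · exact ⟨hj1, fun h => hj2 (Or.inr h)⟩
      · rintro ⟨hj1, hj2⟩
        exact ⟨Or.inr hj1, by rintro (rfl | h); exacts [hiR' hj1, hj2 h]⟩
    rw [this, hv]
  rw [Finset.sum_congr rfl h1, Finset.sum_congr rfl h2, Finset.sum_neg_distrib]
  ring


end Aux17

abbrev Coal (Ω : Type*) [DecidableEq Ω] := {R : Finset Ω // R.Nonempty}

section Main
variable {Ω : Type*} [Fintype Ω] [DecidableEq Ω]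



/-- The raw dividend operator, as a linear map. -/
noncomputable def divraw : (Finset Ω → ℝ) →ₗ[ℝ] (Finset Ω → ℝ) where
  toFun v := fun R => div0 v R
  map_add' v w := by
    funext R
    unfold div0
    simp only [Pi.add_apply, mul_add]
    rw [Finset.sum_add_distrib]
  map_smul' c v := by
    funext R
    unfold div0
    simp only [Pi.smul_apply, smul_eq_mul, RingHom.id_apply]
    rw [Finset.mul_sum]
    exact Finset.sum_congr rfl fun T _ => by ring

noncomputable def divL : GameSpace Ω →ₗ[ℝ] (Coal Ω → ℝ) :=
  (LinearMap.funLeft ℝ ℝ Subtype.val).comp (divraw.comp (GameSpace Ω).subtype)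

lemma divL_apply (v : GameSpace Ω) (R : Coal Ω) :
    divL v R = div0 (v : Finset Ω → ℝ) R.1 := rfl

noncomputable def uniL : (Coal Ω → ℝ) →ₗ[ℝ] GameSpace Ω :=
  Fintype.linearCombination ℝ (fun R : Coal Ω => unanimity R.1 R.2)

lemma uniL_coe (f : Coal Ω → ℝ) (S : Finset Ω) :
    ((uniL f : GameSpace Ω) : Finset Ω → ℝ) S
      = ∑ R : Coal Ω, f R * (if R.1 ⊆ S then 1 else 0) := by
  unfold uniL
  rw [Fintype.linearCombination_apply]
  rw [AddSubmonoidClass.coe_finset_sum, Finset.sum_apply]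
  exact Finset.sum_congr rfl fun R _ => by
    simp [unanimity]

lemma div0_coe_zero (v : GameSpace Ω) : div0 (v : Finset Ω → ℝ) ∅ = 0 := by
  simp only [div0, Finset.powerset_empty, Finset.sum_singleton, Finset.sdiff_empty,
    Finset.card_empty, pow_zero, one_mul]
  exact v.2

lemma uniL_divL (v : GameSpace Ω) : uniL (divL v) = v := by
  apply Subtype.ext
  funext S
  rw [uniL_coe]
  simp only [divL_apply]
  have e1 : ∑ R : Coal Ω, div0 (v : Finset Ω → ℝ) R.1 * (if R.1 ⊆ S then 1 else 0)
      = ∑ R ∈ Finset.univ.filter (fun R : Finset Ω => R.Nonempty),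
          div0 (v : Finset Ω → ℝ) R * (if R ⊆ S then 1 else 0) := by
    exact (Finset.sum_subtype (p := fun R : Finset Ω => R.Nonempty)
      (Finset.univ.filter (fun R : Finset Ω => R.Nonempty))
      (fun x => by simp)
      (fun R => div0 (v : Finset Ω → ℝ) R * (if R ⊆ S then 1 else 0))).symm
  rw [e1]
  have e2 : ∑ R ∈ Finset.univ.filter (fun R : Finset Ω => R.Nonempty),
          div0 (v : Finset Ω → ℝ) R * (if R ⊆ S then 1 else 0)
      = ∑ R : Finset Ω, div0 (v : Finset Ω → ℝ) R * (if R ⊆ S then 1 else 0) := by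
    refine Finset.sum_subset (Finset.filter_subset _ _) ?_
    intro R _ hR
    have : R = ∅ := by
      simpa [Finset.nonempty_iff_ne_empty] using hR
    rw [this, div0_coe_zero, zero_mul]
  rw [e2]
  have e3 : ∑ R : Finset Ω, div0 (v : Finset Ω → ℝ) R * (if R ⊆ S then 1 else 0)
      = ∑ R ∈ S.powerset, div0 (v : Finset Ω → ℝ) R := by
    rw [show S.powerset = Finset.univ.filter (fun R : Finset Ω => R ⊆ S) by
      ext R; simp [Finset.mem_powerset]]
    rw [Finset.sum_filter]
    exact Finset.sum_congr rfl fun R _ => by split <;> simp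
  rw [e3, div0_moebius]

lemma div0_fun_sum {κ : Type*} [Fintype κ] (g : κ → Finset Ω → ℝ) (R : Finset Ω) :
    div0 (fun S => ∑ j, g j S) R = ∑ j, div0 (g j) R := by
  unfold div0
  simp_rw [Finset.mul_sum]
  rw [Finset.sum_comm]

lemma div0_fun_smul (c : ℝ) (w : Finset Ω → ℝ) (R : Finset Ω) :
    div0 (fun S => c * w S) R = c * div0 w R := by
  unfold div0
  rw [Finset.mul_sum]
  exact Finset.sum_congr rfl fun T _ => by ring

lemma divL_uniL (f : Coal Ω → ℝ) : divL (uniL f) = f := by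
  funext R
  rw [divL_apply]
  have : ((uniL f : GameSpace Ω) : Finset Ω → ℝ)
      = fun S => ∑ j : Coal Ω, f j * (if j.1 ⊆ S then 1 else 0) := by
    funext S; exact uniL_coe f S
  rw [this]
  rw [div0_fun_sum (fun j => fun S => f j * (if j.1 ⊆ S then 1 else 0)) R.1]
  have e : ∀ j : Coal Ω, div0 (fun S => f j * (if j.1 ⊆ S then 1 else 0)) R.1
      = f j * (if R.1 = j.1 then 1 else 0) := by
    intro j
    rw [div0_fun_smul, div0_unanimity]
  rw [Finset.sum_congr rfl fun j _ => e j]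
  rw [Finset.sum_eq_single R]
  · simp
  · intro j _ hj
    rw [if_neg (fun h => hj (Subtype.ext h.symm)), mul_zero]
  · intro h; exact absurd (Finset.mem_univ R) h

noncomputable def gameEquiv : GameSpace Ω ≃ₗ[ℝ] (Coal Ω → ℝ) :=
  LinearEquiv.ofLinear divL uniL (LinearMap.ext divL_uniL) (LinearMap.ext uniL_divL)

noncomputable def gameBasis : Module.Basis (Coal Ω) ℝ (GameSpace Ω) := Module.Basis.ofEquivFun gameEquiv

lemma gameBasis_apply (R : Coal Ω) : (gameBasis R : GameSpace Ω) = unanimity R.1 R.2 := by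
  rw [gameBasis, Module.Basis.coe_ofEquivFun]
  show uniL (Pi.single R 1) = unanimity R.1 R.2
  unfold uniL
  rw [Fintype.linearCombination_apply]
  rw [Finset.sum_eq_single R]
  · rw [Pi.single_eq_same, one_smul]
  · intro j _ hj
    rw [Pi.single_eq_of_ne hj, zero_smul]
  · intro h; exact absurd (Finset.mem_univ R) h

end Main

section Main2
variable {Ω : Type*} [Fintype Ω] [DecidableEq Ω]

noncomputable def valEquiv : (Coal Ω → (Ω → ℝ)) ≃ₗ[ℝ] GameValue Ω :=
  (gameBasis (Ω := Ω)).constr ℝ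

lemma valEquiv_u (f : Coal Ω → (Ω → ℝ)) (R : Coal Ω) :
    valEquiv f (unanimity R.1 R.2) = f R := by
  rw [← gameBasis_apply]
  exact (gameBasis (Ω := Ω)).constr_basis ℝ f R

lemma valEquiv_symm_apply (φ : GameValue Ω) (R : Coal Ω) :
    (valEquiv.symm φ) R = φ (unanimity R.1 R.2) := by
  conv_rhs => rw [← valEquiv.apply_symm_apply φ]
  rw [valEquiv_u]

/-- payoffs supported on `R` summing to zero -/
def W (R : Coal Ω) : Submodule ℝ (Ω → ℝ) where
  carrier := {f | (∀ i ∉ R.1, f i = 0) ∧ ∑ i, f i = 0}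
  add_mem' := by
    rintro a b ⟨ha1, ha2⟩ ⟨hb1, hb2⟩
    refine ⟨fun i hi => by simp [Pi.add_apply, ha1 i hi, hb1 i hi], ?_⟩
    simp only [Pi.add_apply]
    rw [Finset.sum_add_distrib, ha2, hb2, add_zero]
  zero_mem' := ⟨fun _ _ => rfl, by simp⟩
  smul_mem' := by
    rintro c f ⟨h1, h2⟩
    refine ⟨fun i hi => by simp [h1 i hi], ?_⟩
    simp only [Pi.smul_apply, smul_eq_mul]
    rw [← Finset.mul_sum, h2, mul_zero]

lemma mem_W {R : Coal Ω} {f : Ω → ℝ} :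
    f ∈ W R ↔ (∀ i ∉ R.1, f i = 0) ∧ ∑ i, f i = 0 := Iff.rfl

def sumF (γ : Type*) [Fintype γ] : (γ → ℝ) →ₗ[ℝ] ℝ where
  toFun f := ∑ i, f i
  map_add' f g := by simp [Finset.sum_add_distrib]
  map_smul' c f := by simp [Finset.mul_sum]

lemma finrank_ker_sumF (γ : Type*) [Fintype γ] [Nonempty γ] :
    Module.finrank ℝ (LinearMap.ker (sumF γ)) = Fintype.card γ - 1 := by
  have hsurj : Function.Surjective (sumF γ) := by
    intro c
    refine ⟨fun _ => c / Fintype.card γ, ?_⟩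
    show ∑ _i : γ, c / (Fintype.card γ : ℝ) = c
    rw [Finset.sum_const, Finset.card_univ, nsmul_eq_mul]
    rw [mul_div_cancel₀]
    exact Nat.cast_ne_zero.2 Fintype.card_ne_zero
  have h := LinearMap.finrank_range_add_finrank_ker (sumF γ)
  rw [LinearMap.range_eq_top.2 hsurj, finrank_top, Module.finrank_self,
    Module.finrank_pi] at h
  omega

noncomputable def WEquiv (R : Coal Ω) :
    W R ≃ₗ[ℝ] LinearMap.ker (sumF {x // x ∈ R.1}) where
  toFun f := ⟨fun i => (f : Ω → ℝ) i.1, by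
    have : ∑ i : {x // x ∈ R.1}, (f : Ω → ℝ) i.1 = ∑ i ∈ R.1, (f : Ω → ℝ) i :=
      Finset.sum_coe_sort R.1 _
    show ∑ i : {x // x ∈ R.1}, (f : Ω → ℝ) i.1 = 0
    rw [this, Finset.sum_subset (Finset.subset_univ R.1)
      (fun x _ hx => f.2.1 x hx)]
    exact f.2.2⟩
  invFun g := ⟨fun i => if h : i ∈ R.1 then (g : {x // x ∈ R.1} → ℝ) ⟨i, h⟩ else 0, by
    constructor
    · intro i hi
      exact dif_neg hi
    · rw [← Finset.sum_subset (Finset.subset_univ R.1)]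
      · rw [← Finset.sum_coe_sort R.1]
        have : ∀ i : {x // x ∈ R.1},
            (if h : i.1 ∈ R.1 then (g : {x // x ∈ R.1} → ℝ) ⟨i.1, h⟩ else 0)
              = (g : {x // x ∈ R.1} → ℝ) i := by
          intro i
          rw [dif_pos i.2]
        rw [Finset.sum_congr rfl fun i _ => this i]
        exact g.2
      · intro x _ hx
        exact dif_neg hx⟩
  map_add' f g := by
    apply Subtype.ext
    funext i
    rfl
  map_smul' c f := by
    apply Subtype.ext
    funext i
    rfl
  left_inv f := by
    apply Subtype.ext
    funext i
    show (if _h : i ∈ R.1 then (f : Ω → ℝ) i else 0) = (f : Ω → ℝ) i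
    by_cases h : i ∈ R.1
    · exact dif_pos h
    · rw [dif_neg h, f.2.1 i h]
  right_inv g := by
    apply Subtype.ext
    funext i
    show (if h : i.1 ∈ R.1 then (g : {x // x ∈ R.1} → ℝ) ⟨i.1, h⟩ else 0) = _
    rw [dif_pos i.2]

lemma finrank_W (R : Coal Ω) : Module.finrank ℝ (W R) = R.1.card - 1 := by
  have : Nonempty {x // x ∈ R.1} := ⟨⟨R.2.choose, R.2.choose_spec⟩⟩
  rw [(WEquiv R).finrank_eq, finrank_ker_sumF, Fintype.card_coe]

def V' : Submodule ℝ (Coal Ω → (Ω → ℝ)) := Submodule.pi Set.univ W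

noncomputable def piEquiv : (V' : Submodule ℝ (Coal Ω → (Ω → ℝ))) ≃ₗ[ℝ] (Π R : Coal Ω, W R) where
  toFun x R := ⟨x.1 R, x.2 R (Set.mem_univ R)⟩
  invFun y := ⟨fun R => (y R).1, fun R _ => (y R).2⟩
  map_add' x y := rfl
  map_smul' c x := rfl
  left_inv x := rfl
  right_inv y := rfl

lemma finrank_V' : Module.finrank ℝ (V' : Submodule ℝ (Coal Ω → (Ω → ℝ)))
    = ∑ R : Coal Ω, (R.1.card - 1) := by
  rw [piEquiv.finrank_eq, Module.finrank_pi_fintype]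
  exact Finset.sum_congr rfl fun R _ => finrank_W R

end Main2

section Main3
variable {Ω : Type*} [Fintype Ω] [DecidableEq Ω]

lemma phi_decomp (φ : GameValue Ω) (v : GameSpace Ω) :
    φ v = ∑ R : Coal Ω, div0 (v : Finset Ω → ℝ) R.1 • φ (unanimity R.1 R.2) := by
  conv_lhs => rw [← uniL_divL v]
  rw [show uniL (divL v) = ∑ R : Coal Ω, divL v R • unanimity R.1 R.2 from
    Fintype.linearCombination_apply ℝ _ _]
  rw [map_sum]
  exact Finset.sum_congr rfl fun R _ => by rw [map_smul, divL_apply]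

lemma sum_div0_eq (v : GameSpace Ω) :
    ∑ R : Coal Ω, div0 (v : Finset Ω → ℝ) R.1 = (v : Finset Ω → ℝ) Finset.univ := by
  have h := congrArg (fun w : GameSpace Ω => (w : Finset Ω → ℝ) Finset.univ) (uniL_divL v)
  try simp only at h
  rw [uniL_coe] at h
  simpa [divL_apply, Finset.subset_univ] using h

lemma quasi_iff (φ : GameValue Ω) :
    IsQuasiValue φ ↔ ∀ R : Coal Ω, (∀ i ∉ R.1, φ (unanimity R.1 R.2) i = 0)
      ∧ ∑ i, φ (unanimity R.1 R.2) i = 1 := by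
  constructor
  · rintro ⟨hnull, heff⟩
    intro R
    constructor
    · intro i hi
      refine hnull _ i ?_
      intro S
      show (if R.1 ⊆ insert i S then (1 : ℝ) else 0) = (if R.1 ⊆ S then 1 else 0)
      simp only [Finset.subset_insert_iff_of_notMem hi]
    · rw [heff]
      show (if R.1 ⊆ Finset.univ then (1 : ℝ) else 0) = 1
      rw [if_pos (Finset.subset_univ _)]
  · intro h
    constructor
    · intro v i hv
      have hd := congrArg (fun w : Ω → ℝ => w i) (phi_decomp φ v)
      simp only [Finset.sum_apply, Pi.smul_apply, smul_eq_mul] at hd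
      rw [hd]
      refine Finset.sum_eq_zero fun R _ => ?_
      by_cases hiR : i ∈ R.1
      · rw [div0_null hiR hv, zero_mul]
      · rw [(h R).1 i hiR, mul_zero]
    · intro v
      have hd : ∀ i, φ v i = ∑ R : Coal Ω,
          div0 (v : Finset Ω → ℝ) R.1 * φ (unanimity R.1 R.2) i := by
        intro i
        have := congrArg (fun w : Ω → ℝ => w i) (phi_decomp φ v)
        simpa [Finset.sum_apply] using this
      rw [Finset.sum_congr rfl fun i _ => hd i, Finset.sum_comm]
      rw [Finset.sum_congr rfl fun R _ => (Finset.mul_sum _ _ _).symm]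
      rw [Finset.sum_congr rfl fun R (_ : R ∈ Finset.univ) => by rw [(h R).2, mul_one]]
      exact sum_div0_eq v

noncomputable def f0 : Coal Ω → Ω → ℝ := fun R i => if i = R.2.choose then 1 else 0

noncomputable def φ0 : GameValue Ω := valEquiv f0

noncomputable def Vq : Submodule ℝ (GameValue Ω) :=
  Submodule.map ((valEquiv : (Coal Ω → (Ω → ℝ)) ≃ₗ[ℝ] GameValue Ω) :
      (Coal Ω → (Ω → ℝ)) →ₗ[ℝ] GameValue Ω)
    (V' : Submodule ℝ (Coal Ω → (Ω → ℝ)))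

set_option maxHeartbeats 1000000 in
lemma quasi_set_eq :
    {φ : GameValue Ω | IsQuasiValue φ}
      = (AffineSubspace.mk' (φ0 (Ω := Ω)) (Vq (Ω := Ω)) : Set (GameValue Ω)) := by
  ext φ
  rw [Set.mem_setOf_eq, quasi_iff, SetLike.mem_coe,
    AffineSubspace.mem_mk', vsub_eq_sub, Vq, Submodule.mem_map_equiv]
  rw [V', Submodule.mem_pi]
  have key : ∀ R : Coal Ω, valEquiv.symm (φ - φ0) R
      = φ (unanimity R.1 R.2) - f0 R := by
    intro R
    rw [map_sub, Pi.sub_apply, valEquiv_symm_apply, valEquiv_symm_apply]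
    congr 1
    rw [φ0]
    exact valEquiv_u f0 R
  constructor
  · intro h R _
    rw [key R, mem_W]
    constructor
    · intro i hi
      rw [Pi.sub_apply, (h R).1 i hi, f0, if_neg, sub_zero]
      rintro rfl
      exact hi R.2.choose_spec
    · simp only [Pi.sub_apply]
      rw [Finset.sum_sub_distrib, (h R).2]
      simp [f0]
  · intro h R
    have hR := h R (Set.mem_univ R)
    rw [key R, mem_W] at hR
    constructor
    · intro i hi
      have := hR.1 i hi
      rw [Pi.sub_apply, f0, if_neg, sub_zero] at this
      · exact this
      · rintro rfl
        exact hi R.2.choose_spec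
    · have := hR.2
      simp only [Pi.sub_apply] at this
      rw [Finset.sum_sub_distrib] at this
      have hf0 : ∑ i, f0 R i = 1 := by simp [f0]
      linarith [this, hf0]

end Main3

section Final
variable {Ω : Type*} [Fintype Ω] [DecidableEq Ω]

lemma two_mul_sum_powerset_card {α : Type*} [DecidableEq α] (s : Finset α) :
    2 * ∑ t ∈ s.powerset, t.card = s.card * 2 ^ s.card := by
  induction s using Finset.induction_on with
  | empty => simp
  | @insert a s ha ih =>
    rw [Finset.sum_powerset_insert ha]
    have h1 : ∑ t ∈ s.powerset, (insert a t).card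
        = (∑ t ∈ s.powerset, t.card) + 2 ^ s.card := by
      rw [Finset.sum_congr rfl (fun t ht =>
        Finset.card_insert_of_notMem (fun h => ha (Finset.mem_powerset.1 ht h)))]
      rw [Finset.sum_add_distrib, Finset.sum_const, Finset.card_powerset, smul_eq_mul, mul_one]
    rw [h1, Finset.card_insert_of_notMem ha, pow_succ]
    calc 2 * ((∑ t ∈ s.powerset, t.card) + ((∑ t ∈ s.powerset, t.card) + 2 ^ s.card))
        = 2 * (∑ t ∈ s.powerset, t.card) + (2 * (∑ t ∈ s.powerset, t.card) + 2 * 2 ^ s.card) := by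
          ring
      _ = s.card * 2 ^ s.card + (s.card * 2 ^ s.card + 2 * 2 ^ s.card) := by rw [ih]
      _ = (s.card + 1) * (2 ^ s.card * 2) := by ring

lemma card_coal : Fintype.card (Coal Ω) = 2 ^ Fintype.card Ω - 1 := by
  have e : Coal Ω ≃ {R : Finset Ω // ¬R = ∅} :=
    Equiv.subtypeEquivRight (fun R => by simp [Finset.nonempty_iff_ne_empty])
  rw [Fintype.card_congr e, Fintype.card_subtype_compl, Fintype.card_subtype_eq,
    Fintype.card_finset]

theorem stmt17' :
    (Module.finrank ℝ
        (affineSpan ℝ {φ : GameValue Ω | IsQuasiValue φ}).direction : ℤ) =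
      (Fintype.card Ω : ℤ) * 2 ^ (Fintype.card Ω - 1) - 2 ^ Fintype.card Ω + 1 := by
  rw [quasi_set_eq, AffineSubspace.affineSpan_coe, AffineSubspace.direction_mk']
  have h1 : Module.finrank ℝ (Vq (Ω := Ω)) = ∑ R : Coal Ω, (R.1.card - 1) := by
    rw [Vq, LinearEquiv.finrank_map_eq, finrank_V']
  rw [h1]
  have hc : ∀ R : Coal Ω, 1 ≤ R.1.card := fun R => Finset.card_pos.2 R.2
  have h2 : ((∑ R : Coal Ω, (R.1.card - 1) : ℕ) : ℤ)
      = (∑ R : Coal Ω, (R.1.card : ℤ)) - (Fintype.card (Coal Ω) : ℤ) := by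
    rw [Nat.cast_sum]
    have e : ∀ R : Coal Ω, ((R.1.card - 1 : ℕ) : ℤ) = (R.1.card : ℤ) - 1 := fun R => by
      have := hc R; omega
    rw [Finset.sum_congr rfl fun R _ => e R, Finset.sum_sub_distrib, Finset.sum_const,
      Finset.card_univ, nsmul_eq_mul, mul_one]
  have h3 : (∑ R : Coal Ω, (R.1.card : ℤ)) = ∑ R : Finset Ω, (R.card : ℤ) := by
    have e1 : (∑ R : Coal Ω, (R.1.card : ℤ))
        = ∑ R ∈ Finset.univ.filter (fun R : Finset Ω => R.Nonempty), (R.card : ℤ) :=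
      (Finset.sum_subtype (p := fun R : Finset Ω => R.Nonempty)
        (Finset.univ.filter (fun R : Finset Ω => R.Nonempty))
        (fun x => by simp) (fun R => (R.card : ℤ))).symm
    rw [e1]
    refine Finset.sum_subset (Finset.filter_subset _ _) ?_
    intro R _ hR
    have : R = ∅ := by simpa [Finset.nonempty_iff_ne_empty] using hR
    simp [this]
  have h4 : 2 * (∑ R : Finset Ω, (R.card : ℤ))
      = (Fintype.card Ω : ℤ) * 2 ^ (Fintype.card Ω) := by
    have hnat := two_mul_sum_powerset_card (Finset.univ : Finset Ω)
    have h' := congrArg (fun n : ℕ => (n : ℤ)) hnat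
    simp only [Finset.powerset_univ, Finset.card_univ] at h'
    push_cast at h'
    exact h'
  have hle : 1 ≤ 2 ^ Fintype.card Ω := Nat.one_le_two_pow
  rw [h2, h3, card_coal, Nat.cast_sub hle]
  push_cast
  cases hn : Fintype.card Ω with
  | zero =>
    rw [hn] at h4
    simp only [Nat.cast_zero, zero_mul, pow_zero] at h4 ⊢
    have : (∑ R : Finset Ω, (R.card : ℤ)) = 0 := by linarith
    rw [this]; ring
  | succ m =>
    rw [hn] at h4
    have hT : (∑ R : Finset Ω, (R.card : ℤ)) = (m + 1) * 2 ^ m := by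
      rw [pow_succ] at h4
      push_cast at h4
      linarith
    rw [hT]
    simp only [Nat.add_sub_cancel]
    push_cast
    rw [pow_succ]
    ring

end Final


/-- for the trivial group, the affine space of all quasi-values on
an `n`-player set has dimension `n·2^{n-1} - 2ⁿ + 1`. -/
theorem stmt17 (Ω : Type*) [Fintype Ω] [DecidableEq Ω] :
    (Module.finrank ℝ
        (affineSpan ℝ {φ : GameValue Ω | IsQuasiValue φ}).direction : ℤ) =
      (Fintype.card Ω : ℤ) * 2 ^ (Fintype.card Ω - 1) - 2 ^ Fintype.card Ω + 1 := by
  exact stmt17'
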